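/- arXiv:0708.2029 — 5 statements merged into one kernel-verified Lean document; each statement's English description precedes it below -/
import Mathlib

section
/- Let E be a finite-dimensional real inner product space and let u, v : E → ℝ be twice continuously differentiable. Then at every point x ∈ E the Laplacians of the products v·e^{2u} and v·e^{-2u} satisfy the identity Δ(v e^{2u})(x) · Δ(v e^{-2u})(x) = (Δv(x) + 4‖∇u(x)‖² v(x))² − (4⟨∇u(x), ∇v(x)⟩ + 2 v(x) Δu(x))². -/
open scoped BigOperators

/-- The Laplacian of `f : E → ℝ` at `x`: the sum of the second directional
derivatives along an orthonormal basis of `E`. -/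
noncomputable def laplacian {E : Type*} [NormedAddCommGroup E] [InnerProductSpace ℝ E]
    [FiniteDimensional ℝ E] (f : E → ℝ) (x : E) : ℝ :=
  ∑ i, iteratedFDeriv ℝ 2 f x ![stdOrthonormalBasis ℝ E i, stdOrthonormalBasis ℝ E i]

section Aux

variable {E : Type*} [NormedAddCommGroup E] [InnerProductSpace ℝ E]
  [FiniteDimensional ℝ E]

lemma aux_hasFDerivAt_fderiv_apply (f : E → ℝ) (hf : ContDiff ℝ 2 f) (x e : E) :
    HasFDerivAt (fun y => fderiv ℝ f y e)
      ((ContinuousLinearMap.apply ℝ ℝ e).comp (fderiv ℝ (fderiv ℝ f) x)) x := by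
  have h1 : ContDiff ℝ 1 (fderiv ℝ f) := hf.fderiv_right (by norm_num)
  exact (ContinuousLinearMap.apply ℝ ℝ e).hasFDerivAt.comp x
    ((h1.differentiable one_ne_zero x).hasFDerivAt)

lemma aux_second_deriv_eq (f : E → ℝ) (hf : ContDiff ℝ 2 f) (x e : E) :
    iteratedFDeriv ℝ 2 f x ![e, e] = fderiv ℝ (fun y => fderiv ℝ f y e) x e := by
  rw [iteratedFDeriv_two_apply, (aux_hasFDerivAt_fderiv_apply f hf x e).fderiv]
  simp

lemma aux_key (u v : E → ℝ) (a : ℝ) (hu : ContDiff ℝ 2 u) (hv : ContDiff ℝ 2 v)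
    (x e : E) :
    iteratedFDeriv ℝ 2 (fun y => v y * Real.exp (2 * a * u y)) x ![e, e]
      = Real.exp (2 * a * u x) * (iteratedFDeriv ℝ 2 v x ![e, e]
          + 4 * a * (fderiv ℝ u x e * fderiv ℝ v x e)
          + (4 * a ^ 2 * (fderiv ℝ u x e) ^ 2
              + 2 * a * iteratedFDeriv ℝ 2 u x ![e, e]) * v x) := by
  set g : E → ℝ := fun y => Real.exp (2 * a * u y) with hgdef
  have hg : ContDiff ℝ 2 g := Real.contDiff_exp.comp (contDiff_const.mul hu)
  have hgd : ∀ y, HasFDerivAt g ((2 * a * g y) • fderiv ℝ u y) y := by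
    intro y
    have h1 : HasFDerivAt (fun y => 2 * a * u y) ((2 * a) • fderiv ℝ u y) y :=
      ((hu.differentiable (by norm_num) y).hasFDerivAt).const_mul (2 * a)
    have := h1.exp
    rwa [smul_smul, mul_comm (Real.exp (2 * a * u y)) (2 * a)] at this
  have hf : ContDiff ℝ 2 (fun y => v y * g y) := hv.mul hg
  have hfd : ∀ y, fderiv ℝ (fun y => v y * g y) y e
      = 2 * a * v y * g y * (fderiv ℝ u y e) + g y * (fderiv ℝ v y e) := by
    intro y
    rw [show (fun y => v y * g y) = v * g from rfl,
      ((hv.differentiable (by norm_num) y).hasFDerivAt.mul (hgd y)).fderiv]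
    simp only [ContinuousLinearMap.add_apply, ContinuousLinearMap.smul_apply, smul_eq_mul]
    ring
  rw [aux_second_deriv_eq _ hf x e]
  have hfun : (fun y => fderiv ℝ (fun y => v y * g y) y e)
      = fun y => 2 * a * v y * g y * (fderiv ℝ u y e) + g y * (fderiv ℝ v y e) :=
    funext hfd
  rw [hfun]
  have hue := aux_hasFDerivAt_fderiv_apply u hu x e
  have hve := aux_hasFDerivAt_fderiv_apply v hv x e
  have hvx := (hv.differentiable (by norm_num) x).hasFDerivAt
  have hgx := hgd x
  have H := ((((hvx.const_mul (2 * a)).mul hgx).mul hue).add (hgx.mul hve))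
  rw [show (fun y => 2 * a * v y * g y * (fderiv ℝ u y e) + g y * (fderiv ℝ v y e))
      = (((fun y => 2 * a * v y) * g * fun y => (fderiv ℝ u y) e) + g * fun y => (fderiv ℝ v y) e)
      from rfl, H.fderiv]
  rw [iteratedFDeriv_two_apply u, iteratedFDeriv_two_apply v]
  simp [ContinuousLinearMap.comp_apply, ContinuousLinearMap.apply_apply, smul_smul]
  ring

lemma aux_sum_helper {ι : Type*} (s : Finset ι) (A B C D : ι → ℝ) (c d e f k : ℝ) :
    ∑ i ∈ s, c * (A i + d * B i + (e * C i + f * D i) * k)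
      = c * ((∑ i ∈ s, A i) + d * (∑ i ∈ s, B i)
          + (e * (∑ i ∈ s, C i) + f * (∑ i ∈ s, D i)) * k) := by
  classical
  induction s using Finset.induction with
  | empty => simp
  | insert _ _ h ih =>
    rw [Finset.sum_insert h, Finset.sum_insert h, Finset.sum_insert h,
      Finset.sum_insert h, Finset.sum_insert h, ih]
    ring

lemma aux_lap_formula (u v : E → ℝ) (a : ℝ) (hu : ContDiff ℝ 2 u)
    (hv : ContDiff ℝ 2 v) (x : E) :
    laplacian (fun y => v y * Real.exp (2 * a * u y)) x
      = Real.exp (2 * a * u x) * (laplacian v x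
          + 4 * a * (inner ℝ (gradient u x) (gradient v x) : ℝ)
          + (4 * a ^ 2 * ‖gradient u x‖ ^ 2 + 2 * a * laplacian u x) * v x) := by
  have hinner : ∀ (f : E → ℝ) (e : E), fderiv ℝ f x e = (inner ℝ (gradient f x) e : ℝ) := by
    intro f e
    rw [gradient, InnerProductSpace.toDual_symm_apply]
  set b := stdOrthonormalBasis ℝ E
  unfold laplacian
  rw [Finset.sum_congr rfl fun i _ => aux_key u v a hu hv x (b i)]
  rw [aux_sum_helper]
  have hS2 : ∑ i, fderiv ℝ u x (b i) * fderiv ℝ v x (b i)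
      = (inner ℝ (gradient u x) (gradient v x) : ℝ) := by
    rw [Finset.sum_congr rfl fun i (_ : i ∈ Finset.univ) => by
      rw [hinner u (b i), hinner v (b i), ← real_inner_comm (gradient v x) (b i)]]
    exact b.sum_inner_mul_inner (gradient u x) (gradient v x)
  have hS3 : ∑ i, (fderiv ℝ u x (b i)) ^ 2 = ‖gradient u x‖ ^ 2 := by
    have hterm : ∀ i : Fin (Module.finrank ℝ E), (fderiv ℝ u x (b i)) ^ 2
        = (inner ℝ (gradient u x) (b i) : ℝ) * inner ℝ (b i) (gradient u x) := fun i => by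
      rw [hinner u (b i), real_inner_comm (b i)]; ring
    rw [Finset.sum_congr rfl fun i _ => hterm i,
      b.sum_inner_mul_inner (gradient u x) (gradient u x), real_inner_self_eq_norm_sq]
  rw [hS2, hS3]

end Aux

/-- Pointwise identity for the product of the Laplacians of `v e^{2u}` and `v e^{-2u}`:
`Δ(v e^{2u}) Δ(v e^{-2u}) = (Δv + 4‖∇u‖² v)² − (4⟨∇u, ∇v⟩ + 2 v Δu)²`. -/
theorem stmt_1 {E : Type*} [NormedAddCommGroup E] [InnerProductSpace ℝ E]
    [FiniteDimensional ℝ E] (u v : E → ℝ)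
    (hu : ContDiff ℝ 2 u) (hv : ContDiff ℝ 2 v) (x : E) :
    laplacian (fun y => v y * Real.exp (2 * u y)) x
        * laplacian (fun y => v y * Real.exp (-2 * u y)) x
      = (laplacian v x + 4 * ‖gradient u x‖ ^ 2 * v x) ^ 2
        - (4 * (inner ℝ (gradient u x) (gradient v x) : ℝ) + 2 * v x * laplacian u x) ^ 2 := by
  have e1 : (fun y => v y * Real.exp (2 * u y))
      = fun y => v y * Real.exp (2 * (1 : ℝ) * u y) := by norm_num
  have e2 : (fun y => v y * Real.exp (-2 * u y))
      = fun y => v y * Real.exp (2 * (-1 : ℝ) * u y) := by norm_num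
  rw [e1, e2, aux_lap_formula u v 1 hu hv x, aux_lap_formula u v (-1) hu hv x]
  rw [mul_mul_mul_comm, ← Real.exp_add]
  norm_num
  ring
end

section
/- Let E be a finite-dimensional real inner product space and let u, v : E → ℝ be twice continuously differentiable. Then at every point x ∈ E one has the lower bound Δ(v e^{2u})(x) · Δ(v e^{-2u})(x) ≥ (1/2)(Δv(x))² − 32·( ‖∇u(x)‖⁴ v(x)² + ⟨∇u(x), ∇v(x)⟩² + (Δu(x))² v(x)² ). -/
open scoped BigOperators

section Aux

variable {E : Type*} [NormedAddCommGroup E] [InnerProductSpace ℝ E]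

lemma my_hasFDerivAt_fderiv_apply {f : E → ℝ} (hf : ContDiff ℝ 2 f) (x e : E) :
    HasFDerivAt (fun y => fderiv ℝ f y e) ((fderiv ℝ (fderiv ℝ f) x).flip e) x := by
  have h1 : ContDiff ℝ 1 (fderiv ℝ f) := hf.fderiv_right (by norm_num)
  have h := ((h1.differentiable (by norm_num)) x).hasFDerivAt
  have h2 := h.clm_apply (hasFDerivAt_const e x)
  simpa using h2

lemma my_iteratedFDeriv_two_self (f : E → ℝ) (x e : E) :
    iteratedFDeriv ℝ 2 f x ![e, e] = fderiv ℝ (fderiv ℝ f) x e e := by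
  rw [iteratedFDeriv_two_apply]; simp

lemma my_key (c : ℝ) {u v : E → ℝ} (hu : ContDiff ℝ 2 u) (hv : ContDiff ℝ 2 v) (x e : E) :
    iteratedFDeriv ℝ 2 (fun y => v y * Real.exp (c * u y)) x ![e, e]
      = Real.exp (c * u x) *
        (iteratedFDeriv ℝ 2 v x ![e, e]
          + 2 * c * fderiv ℝ v x e * fderiv ℝ u x e
          + c * v x * iteratedFDeriv ℝ 2 u x ![e, e]
          + c ^ 2 * v x * (fderiv ℝ u x e) ^ 2) := by
  set f : E → ℝ := fun y => v y * Real.exp (c * u y) with hfdef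
  have hf2 : ContDiff ℝ 2 f := hv.mul ((contDiff_const.mul hu).exp)
  have hud : ∀ y, HasFDerivAt u (fderiv ℝ u y) y :=
    fun y => ((hu.differentiable (by norm_num)) y).hasFDerivAt
  have hvd : ∀ y, HasFDerivAt v (fderiv ℝ v y) y :=
    fun y => ((hv.differentiable (by norm_num)) y).hasFDerivAt
  have hW : ∀ y, HasFDerivAt (fun z => Real.exp (c * u z))
      (Real.exp (c * u y) • (c • fderiv ℝ u y)) y :=
    fun y => ((hud y).const_mul c).exp
  have hf' : ∀ y, HasFDerivAt f
      (v y • (Real.exp (c * u y) • (c • fderiv ℝ u y)) + Real.exp (c * u y) • fderiv ℝ v y) y :=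
    fun y => (hvd y).mul (hW y)
  have hfe : ∀ y, fderiv ℝ f y e
      = v y * (Real.exp (c * u y) * (c * fderiv ℝ u y e))
        + Real.exp (c * u y) * fderiv ℝ v y e := by
    intro y
    rw [(hf' y).fderiv]
    simp [smul_eq_mul]
  have hgf : (fun y => fderiv ℝ f y e)
      = fun y => v y * (Real.exp (c * u y) * (c * fderiv ℝ u y e))
          + Real.exp (c * u y) * fderiv ℝ v y e := funext hfe
  have hdu_e := my_hasFDerivAt_fderiv_apply hu x e
  have hdv_e := my_hasFDerivAt_fderiv_apply hv x e
  have hg := ((hvd x).mul ((hW x).mul (hdu_e.const_mul c))).add ((hW x).mul hdv_e)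
  have e1 : iteratedFDeriv ℝ 2 f x ![e, e] = fderiv ℝ (fun y => fderiv ℝ f y e) x e := by
    rw [my_iteratedFDeriv_two_self, (my_hasFDerivAt_fderiv_apply hf2 x e).fderiv]
    rfl
  rw [e1, hgf, (show HasFDerivAt (fun y => v y * (Real.exp (c * u y) * (c * fderiv ℝ u y e))
      + Real.exp (c * u y) * fderiv ℝ v y e) _ x from hg).fderiv]
  rw [my_iteratedFDeriv_two_self u x e, my_iteratedFDeriv_two_self v x e]
  simp only [ContinuousLinearMap.add_apply, ContinuousLinearMap.smul_apply,
    ContinuousLinearMap.flip_apply, smul_eq_mul, Pi.mul_apply]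
  ring

end Aux

section Aux2

variable {E : Type*} [NormedAddCommGroup E] [InnerProductSpace ℝ E] [FiniteDimensional ℝ E]

lemma my_fderiv_eq_inner_gradient (f : E → ℝ) (x y : E) :
    fderiv ℝ f x y = (inner ℝ (gradient f x) y : ℝ) := by
  simp [gradient, InnerProductSpace.toDual_symm_apply]

lemma my_lap_mul_exp (c : ℝ) {u v : E → ℝ} (hu : ContDiff ℝ 2 u) (hv : ContDiff ℝ 2 v) (x : E) :
    laplacian (fun y => v y * Real.exp (c * u y)) x
      = Real.exp (c * u x) *
        (laplacian v x
          + 2 * c * (inner ℝ (gradient u x) (gradient v x) : ℝ)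
          + c * v x * laplacian u x
          + c ^ 2 * v x * ‖gradient u x‖ ^ 2) := by
  classical
  have expand : ∀ f : E → ℝ, laplacian f x
      = ∑ i, iteratedFDeriv ℝ 2 f x ![stdOrthonormalBasis ℝ E i, stdOrthonormalBasis ℝ E i] :=
    fun f => rfl
  set b := stdOrthonormalBasis ℝ E with hb
  have hS : ∑ i, fderiv ℝ v x (b i) * fderiv ℝ u x (b i)
      = (inner ℝ (gradient u x) (gradient v x) : ℝ) := by
    have h1 : ∀ i, fderiv ℝ v x (b i) * fderiv ℝ u x (b i)
        = (inner ℝ (gradient v x) (b i) : ℝ) * (inner ℝ (b i) (gradient u x) : ℝ) := by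
      intro i
      rw [my_fderiv_eq_inner_gradient v x (b i), my_fderiv_eq_inner_gradient u x (b i),
        real_inner_comm (gradient u x) (b i)]
    rw [Finset.sum_congr rfl fun i _ => h1 i, b.sum_inner_mul_inner,
      real_inner_comm (gradient v x) (gradient u x)]
  have hN : ∑ i, (fderiv ℝ u x (b i)) ^ 2 = ‖gradient u x‖ ^ 2 := by
    have h1 : ∀ i, (fderiv ℝ u x (b i)) ^ 2
        = (inner ℝ (gradient u x) (b i) : ℝ) * (inner ℝ (b i) (gradient u x) : ℝ) := by
      intro i
      rw [my_fderiv_eq_inner_gradient u x (b i), real_inner_comm (gradient u x) (b i)]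
      ring
    rw [Finset.sum_congr rfl fun i _ => h1 i, b.sum_inner_mul_inner,
      real_inner_self_eq_norm_sq]
  have h2 : ∑ i, 2 * c * fderiv ℝ v x (b i) * fderiv ℝ u x (b i)
      = 2 * c * (inner ℝ (gradient u x) (gradient v x) : ℝ) := by
    rw [← hS, Finset.mul_sum]
    exact Finset.sum_congr rfl fun i _ => by ring
  have h3 : ∑ i, c * v x * iteratedFDeriv ℝ 2 u x ![b i, b i]
      = c * v x * laplacian u x := by
    rw [expand u, ← Finset.mul_sum]
  have h4 : ∑ i, c ^ 2 * v x * (fderiv ℝ u x (b i)) ^ 2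
      = c ^ 2 * v x * ‖gradient u x‖ ^ 2 := by
    rw [← hN, ← Finset.mul_sum]
  rw [expand (fun y => v y * Real.exp (c * u y)),
    Finset.sum_congr rfl fun i _ => my_key c hu hv x (b i), ← Finset.mul_sum,
    Finset.sum_add_distrib, Finset.sum_add_distrib, Finset.sum_add_distrib, h2, h3, h4,
    ← expand v]

end Aux2

/-- Pointwise lower bound:
`Δ(v e^{2u}) Δ(v e^{-2u}) ≥ (1/2)(Δv)² − 32(‖∇u‖⁴ v² + ⟨∇u, ∇v⟩² + (Δu)² v²)`. -/
theorem stmt_2 {E : Type*} [NormedAddCommGroup E] [InnerProductSpace ℝ E]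
    [FiniteDimensional ℝ E] (u v : E → ℝ)
    (hu : ContDiff ℝ 2 u) (hv : ContDiff ℝ 2 v) (x : E) :
    laplacian (fun y => v y * Real.exp (2 * u y)) x
        * laplacian (fun y => v y * Real.exp (-2 * u y)) x
      ≥ (1 / 2) * (laplacian v x) ^ 2
        - 32 * (‖gradient u x‖ ^ 4 * (v x) ^ 2
            + (inner ℝ (gradient u x) (gradient v x) : ℝ) ^ 2
            + (laplacian u x) ^ 2 * (v x) ^ 2) := by
  have h1 := my_lap_mul_exp 2 hu hv x
  have h2 := my_lap_mul_exp (-2) hu hv x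
  rw [h1, h2]
  have hexp : Real.exp (2 * u x) * Real.exp (-2 * u x) = 1 := by
    rw [← Real.exp_add]; ring_nf; exact Real.exp_zero
  set A := laplacian v x
  set S := (inner ℝ (gradient u x) (gradient v x) : ℝ)
  set B := laplacian u x
  set V := v x
  set N := ‖gradient u x‖ ^ 2 with hN
  have hN4 : ‖gradient u x‖ ^ 4 = N ^ 2 := by rw [hN]; ring
  rw [hN4]
  have key : Real.exp (2 * u x) * (A + 2 * 2 * S + 2 * V * B + 2 ^ 2 * V * N) *
      (Real.exp (-2 * u x) * (A + 2 * (-2) * S + -2 * V * B + (-2) ^ 2 * V * N))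
      = (A + 4 * S + 2 * V * B + 4 * V * N) * (A - 4 * S - 2 * V * B + 4 * V * N) := by
    have : Real.exp (2 * u x) * (A + 2 * 2 * S + 2 * V * B + 2 ^ 2 * V * N) *
        (Real.exp (-2 * u x) * (A + 2 * (-2) * S + -2 * V * B + (-2) ^ 2 * V * N))
        = (Real.exp (2 * u x) * Real.exp (-2 * u x)) *
          ((A + 4 * S + 2 * V * B + 4 * V * N) * (A - 4 * S - 2 * V * B + 4 * V * N)) := by ring
    rw [this, hexp, one_mul]
  rw [key]
  nlinarith [sq_nonneg (A + 8 * V * N), sq_nonneg (4 * S - 2 * V * B), sq_nonneg (4 * S + 2 * V * B), sq_nonneg (A + 4 * V * N), sq_nonneg N, sq_nonneg (V * N)]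
end

section
/- Let C > 0, ε > 0, δ > 0 satisfy C(1 + 3ε)δ < 2ε, let t₀ ∈ ℝ, and let x : ℝ → ℝ be differentiable on [t₀, ∞) with x(t) ≥ 0 for all t ≥ t₀, x(t₀) ≤ ε, x integrable on [t₀, ∞) with ∫_{t₀}^∞ x(t) dt ≤ δ, and x'(t) ≤ C (x(t)² + x(t)) for all t ≥ t₀. Then x(t) ≤ 3ε for all t ≥ t₀. -/
open MeasureTheory

/-- Quantitative non-concentration: if `x ≥ 0` on `[t₀, ∞)`, `x(t₀) ≤ ε`,
`∫_{t₀}^∞ x ≤ δ`, `x' ≤ C(x² + x)` on `[t₀, ∞)` and `C(1 + 3ε)δ < 2ε`,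
then `x ≤ 3ε` on `[t₀, ∞)`. -/
theorem stmt_4 (C ε δ : ℝ) (hC : 0 < C) (hε : 0 < ε) (hδ : 0 < δ)
    (hsmall : C * (1 + 3 * ε) * δ < 2 * ε) (t₀ : ℝ) (x x' : ℝ → ℝ)
    (hderiv : ∀ t ≥ t₀, HasDerivWithinAt x (x' t) (Set.Ici t₀) t)
    (hxnn : ∀ t ≥ t₀, 0 ≤ x t)
    (hx0 : x t₀ ≤ ε)
    (hint : IntegrableOn x (Set.Ici t₀))
    (hintle : ∫ t in Set.Ici t₀, x t ≤ δ)
    (hdi : ∀ t ≥ t₀, x' t ≤ C * ((x t) ^ 2 + x t)) :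
    ∀ t ≥ t₀, x t ≤ 3 * ε := by
  set K := C * (1 + 3 * ε) with hKdef
  have hKpos : 0 < K := by positivity
  have hxcont : ContinuousOn x (Set.Ici t₀) := fun t ht => (hderiv t ht).continuousWithinAt
  by_contra hcon
  push_neg at hcon
  obtain ⟨T, hT, hxT⟩ := hcon
  -- the set of "bad" times
  set S : Set ℝ := Set.Ici t₀ ∩ x ⁻¹' Set.Ici (3 * ε) with hSdef
  have hSne : S.Nonempty := ⟨T, hT, le_of_lt hxT⟩
  have hSbdd : BddBelow S := ⟨t₀, fun s hs => hs.1⟩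
  have hSclosed : IsClosed S :=
    hxcont.preimage_isClosed_of_isClosed isClosed_Ici isClosed_Ici
  set t₁ := sInf S with ht₁def
  have ht₁S : t₁ ∈ S := hSclosed.csInf_mem hSne hSbdd
  have ht₁ : t₀ ≤ t₁ := ht₁S.1
  have hx₁ : 3 * ε ≤ x t₁ := ht₁S.2
  have h01 : t₀ < t₁ := by
    rcases lt_or_eq_of_le ht₁ with h | h
    · exact h
    · exfalso; rw [← h] at hx₁; nlinarith
  have hlt : ∀ s, t₀ ≤ s → s < t₁ → x s < 3 * ε := by
    intro s hs hst
    by_contra h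
    push_neg at h
    exact absurd (csInf_le hSbdd ⟨hs, h⟩) (not_le.2 hst)
  -- nonnegativity a.e. on the restricted measure
  have hxnn_ae : 0 ≤ᵐ[volume.restrict (Set.Ici t₀)] x := by
    filter_upwards [ae_restrict_mem measurableSet_Ici] with s hs using hxnn s hs
  -- key claim : on [t₀, t₁), x t ≤ ε + K * δ
  have key : ∀ t, t₀ ≤ t → t < t₁ → x t ≤ ε + K * δ := by
    intro t ht0 htt1
    rcases eq_or_lt_of_le ht0 with h | h
    · rw [← h]; nlinarith
    set F : ℝ → ℝ := fun s => ∫ u in t₀..s, x u with hFdef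
    set y : ℝ → ℝ := fun s => x s - K * F s with hydef
    have hIcc : Set.Icc t₀ t ⊆ Set.Ici t₀ := Set.Icc_subset_Ici_self
    -- continuity of y on [t₀, t]
    have hFcont : ContinuousOn F (Set.Icc t₀ t) := by
      have h1 : ContinuousOn (fun s => ∫ u in Set.Ioc t₀ s, x u) (Set.Icc t₀ t) :=
        intervalIntegral.continuousOn_primitive (hint.mono hIcc le_rfl)
      refine ContinuousOn.congr h1 fun s hs => ?_
      rw [hFdef]
      exact intervalIntegral.integral_of_le hs.1
    have hycont : ContinuousOn y (Set.Icc t₀ t) :=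
      (hxcont.mono hIcc).sub (continuousOn_const.mul hFcont)
    -- derivative of y on the interior
    have hyderiv : ∀ s ∈ Set.Ioo t₀ t, HasDerivAt y (x' s - K * x s) s := by
      intro s hs
      have hs0 : t₀ ≤ s := le_of_lt hs.1
      have hnhds : Set.Ici t₀ ∈ nhds s := Ici_mem_nhds hs.1
      have hxs : HasDerivAt x (x' s) s := (hderiv s hs0).hasDerivAt hnhds
      have hii : IntervalIntegrable x volume t₀ s := by
        apply IntegrableOn.intervalIntegrable
        apply hint.mono _ le_rfl
        rw [Set.uIcc_of_le hs0]
        exact Set.Icc_subset_Ici_self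
      have hmeas : StronglyMeasurableAtFilter x (nhds s) volume :=
        (hxcont.mono (Set.Ioi_subset_Ici_self)).stronglyMeasurableAtFilter isOpen_Ioi s hs.1
      have hFs : HasDerivAt F (x s) s :=
        intervalIntegral.integral_hasDerivAt_right hii hmeas hxs.continuousAt
      exact hxs.sub (hFs.const_mul K)
    have hanti : AntitoneOn y (Set.Icc t₀ t) := by
      apply antitoneOn_of_deriv_nonpos (convex_Icc t₀ t) hycont
      · intro s hs
        rw [interior_Icc] at hs
        exact ((hyderiv s hs).differentiableAt).differentiableWithinAt
      · intro s hs
        rw [interior_Icc] at hs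
        rw [(hyderiv s hs).deriv]
        have hs0 : t₀ ≤ s := le_of_lt hs.1
        have h1 := hdi s hs0
        have h2 := hxnn s hs0
        have h3 : x s < 3 * ε := hlt s hs0 (lt_trans hs.2 htt1)
        rw [hKdef]
        nlinarith [mul_nonneg hC.le (mul_nonneg h2 (by linarith : (0:ℝ) ≤ 3 * ε - x s))]
    have hyy : y t ≤ y t₀ :=
      hanti (Set.left_mem_Icc.2 (le_of_lt h)) (Set.right_mem_Icc.2 (le_of_lt h)) (le_of_lt h)
    have hyt₀ : y t₀ = x t₀ := by
      simp [hydef, hFdef, intervalIntegral.integral_same]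
    have hFδ : F t ≤ δ := by
      have h1 : F t = ∫ u in Set.Ioc t₀ t, x u := intervalIntegral.integral_of_le ht0
      have h2 : (∫ u in Set.Ioc t₀ t, x u) ≤ ∫ u in Set.Ici t₀, x u := by
        apply setIntegral_mono_set hint hxnn_ae
        exact Filter.Eventually.of_forall fun u hu => le_of_lt hu.1
      linarith
    have : x t - K * F t ≤ ε := by
      have := hyy
      rw [hyt₀] at this
      simp only [hydef] at this
      linarith
    nlinarith [mul_le_mul_of_nonneg_left hFδ (le_of_lt hKpos)]
  -- pass to the limit t → t₁⁻
  have hlim : x t₁ ≤ ε + K * δ := by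
    have hnb : (nhdsWithin t₁ (Set.Ico t₀ t₁)).NeBot := right_nhdsWithin_Ico_neBot h01
    have htend : Filter.Tendsto x (nhdsWithin t₁ (Set.Ico t₀ t₁)) (nhds (x t₁)) :=
      (hxcont t₁ ht₁).mono fun s hs => hs.1
    refine le_of_tendsto htend ?_
    filter_upwards [eventually_mem_nhdsWithin] with s hs using key s hs.1 hs.2
  nlinarith
end

section
/- Let C > 0 and let x : ℝ → ℝ be differentiable on [0, ∞) with x(t) ≥ 0 for all t ≥ 0, x integrable on [0, ∞), and x'(t) ≤ C (x(t)² + x(t)) for all t ≥ 0. Then x(t) → 0 as t → ∞. -/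
open MeasureTheory Filter

set_option maxHeartbeats 1000000 in
/-- If `x ≥ 0` on `[0, ∞)` is integrable and satisfies `x' ≤ C(x² + x)` there,
then `x(t) → 0` as `t → ∞`. -/
theorem stmt_5 (C : ℝ) (hC : 0 < C) (x x' : ℝ → ℝ)
    (hderiv : ∀ t ≥ (0 : ℝ), HasDerivWithinAt x (x' t) (Set.Ici 0) t)
    (hxnn : ∀ t ≥ (0 : ℝ), 0 ≤ x t)
    (hint : IntegrableOn x (Set.Ici 0))
    (hdi : ∀ t ≥ (0 : ℝ), x' t ≤ C * ((x t) ^ 2 + x t)) :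
    Tendsto x atTop (nhds 0) := by
  set y : ℝ → ℝ := fun t => x t / (1 + x t) with hy_def
  have h1x : ∀ t ≥ (0:ℝ), (0:ℝ) < 1 + x t := fun t ht => by linarith [hxnn t ht]
  have hynn : ∀ t ≥ (0:ℝ), 0 ≤ y t := fun t ht =>
    div_nonneg (hxnn t ht) (h1x t ht).le
  -- derivative of y
  have hyderiv : ∀ t ≥ (0:ℝ), HasDerivWithinAt y (x' t / (1 + x t) ^ 2) (Set.Ici 0) t := by
    intro t ht
    have h := (hderiv t ht).div
      ((hasDerivWithinAt_const t (Set.Ici (0:ℝ)) (1:ℝ)).add (hderiv t ht)) (h1x t ht).ne'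
    convert h using 1
    · rfl
    · rfl
    · rfl
    simp only [Pi.add_apply, zero_add]
    ring
  set z : ℝ → ℝ := fun t => y t * Real.exp (-C * t) with hz_def
  have hzderiv : ∀ t ≥ (0:ℝ), HasDerivWithinAt z
      (x' t / (1 + x t) ^ 2 * Real.exp (-C*t) + y t * (Real.exp (-C*t) * -C)) (Set.Ici 0) t := by
    intro t ht
    have he : HasDerivAt (fun t : ℝ => Real.exp (-C*t)) (Real.exp (-C*t) * -C) t := by
      have := ((hasDerivAt_id t).const_mul (-C)).exp
      simpa [mul_comm] using this
    exact (hyderiv t ht).mul he.hasDerivWithinAt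
  have hznonpos : ∀ t ≥ (0:ℝ),
      x' t / (1 + x t) ^ 2 * Real.exp (-C*t) + y t * (Real.exp (-C*t) * -C) ≤ 0 := by
    intro t ht
    have h1 := h1x t ht
    have hbound : x' t / (1 + x t) ^ 2 ≤ C * y t := by
      rw [div_le_iff₀ (by positivity)]
      have hkey : C * y t * (1 + x t) ^ 2 = C * (x t ^ 2 + x t) := by
        simp only [hy_def]
        field_simp
        ring
      rw [hkey]
      exact hdi t ht
    have hE := Real.exp_pos (-C*t)
    nlinarith [mul_le_mul_of_nonneg_right hbound hE.le]
  -- z is antitone on [0, ∞)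
  have hzanti : AntitoneOn z (Set.Ici (0:ℝ)) := by
    apply antitoneOn_of_deriv_nonpos (convex_Ici 0)
    · intro t ht
      exact (hzderiv t ht).continuousWithinAt
    · intro t ht
      rw [interior_Ici] at ht
      exact ((hzderiv t ht.le).hasDerivAt (Ici_mem_nhds ht)).differentiableAt.differentiableWithinAt
    · intro t ht
      rw [interior_Ici] at ht
      rw [((hzderiv t ht.le).hasDerivAt (Ici_mem_nhds ht)).deriv]
      exact hznonpos t ht.le
  -- key lower bound on unit intervals
  have key : ∀ t : ℝ, 1 ≤ t → ∀ s ∈ Set.Icc (t-1) t, y t * Real.exp (-C) ≤ y s := by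
    intro t ht1 s hs
    have hs0 : (0:ℝ) ≤ s := by have := hs.1; linarith
    have ht0 : (0:ℝ) ≤ t := by linarith
    have h1 : y t * Real.exp (-C*t) ≤ y s * Real.exp (-C*s) := hzanti hs0 ht0 hs.2
    have hE : Real.exp (-C) ≤ Real.exp (-C*t + C*s) := by
      apply Real.exp_le_exp.2
      have : t - s ≤ 1 := by have := hs.1; linarith
      nlinarith
    calc y t * Real.exp (-C) ≤ y t * Real.exp (-C*t + C*s) :=
          mul_le_mul_of_nonneg_left hE (hynn t ht0)
      _ = y t * Real.exp (-C*t) * Real.exp (C*s) := by rw [Real.exp_add]; ring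
      _ ≤ y s * Real.exp (-C*s) * Real.exp (C*s) :=
          mul_le_mul_of_nonneg_right h1 (Real.exp_pos _).le
      _ = y s := by rw [mul_assoc, ← Real.exp_add]; simp
  -- integrability of y
  have hymeas : AEStronglyMeasurable y (volume.restrict (Set.Ici (0:ℝ))) := by
    have hxm : AEMeasurable x (volume.restrict (Set.Ici (0:ℝ))) := hint.aemeasurable
    exact (hxm.div (aemeasurable_const.add hxm)).aestronglyMeasurable
  have hyint : IntegrableOn y (Set.Ici (0:ℝ)) := by
    refine Integrable.mono hint hymeas ?_
    filter_upwards [ae_restrict_mem measurableSet_Ici] with t ht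
    have h1 := h1x t ht
    have hx0 := hxnn t ht
    rw [Real.norm_eq_abs, Real.norm_eq_abs, abs_of_nonneg (hynn t ht), abs_of_nonneg hx0]
    simp only [hy_def]
    rw [div_le_iff₀ h1]
    nlinarith
  have hyint' : IntegrableOn y (Set.Ioi (0:ℝ)) := hyint.mono_set Set.Ioi_subset_Ici_self
  -- y tends to 0
  have hy0 : Tendsto y atTop (nhds 0) := by
    by_contra hcon
    rw [Metric.tendsto_atTop] at hcon
    push_neg at hcon
    obtain ⟨ε, hε, hfreq⟩ := hcon
    have hF : Tendsto (fun b => ∫ s in (0:ℝ)..b, y s) atTop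
        (nhds (∫ s in Set.Ioi (0:ℝ), y s)) :=
      intervalIntegral_tendsto_integral_Ioi 0 hyint' tendsto_id
    have hG : Tendsto (fun b => (∫ s in (0:ℝ)..b, y s) - ∫ s in (0:ℝ)..(b-1), y s)
        atTop (nhds 0) := by
      have h2 := hF.comp (tendsto_atTop_add_const_right atTop (-1) tendsto_id)
      have := hF.sub h2
      simpa [Function.comp, sub_eq_add_neg] using this
    have hpos : 0 < ε * Real.exp (-C) := by positivity
    have hev : ∀ᶠ b in atTop,
        (∫ s in (0:ℝ)..b, y s) - (∫ s in (0:ℝ)..(b-1), y s) < ε * Real.exp (-C) :=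
      hG.eventually (gt_mem_nhds hpos)
    obtain ⟨N, hN⟩ := eventually_atTop.1 hev
    obtain ⟨t, ht, hyt⟩ := hfreq (max N 1)
    have ht1 : (1:ℝ) ≤ t := le_trans (le_max_right N 1) ht
    have htN : N ≤ t := le_trans (le_max_left N 1) ht
    have ht0 : (0:ℝ) ≤ t := by linarith
    have hyt' : ε ≤ y t := by
      rwa [Real.dist_eq, sub_zero, abs_of_nonneg (hynn t ht0)] at hyt
    have hIcc1 : Set.Icc (t-1) t ⊆ Set.Ici (0:ℝ) := fun s hs => by
      have := hs.1; simp only [Set.mem_Ici]; linarith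
    have hIcc2 : Set.Icc (0:ℝ) (t-1) ⊆ Set.Ici (0:ℝ) := fun s hs => hs.1
    have hii1 : IntervalIntegrable y volume (t-1) t := by
      rw [intervalIntegrable_iff_integrableOn_Icc_of_le (by linarith)]
      exact hyint.mono_set hIcc1
    have hii2 : IntervalIntegrable y volume 0 (t-1) := by
      rw [intervalIntegrable_iff_integrableOn_Icc_of_le (by linarith)]
      exact hyint.mono_set hIcc2
    have hlow : ε * Real.exp (-C) ≤ ∫ s in (t-1)..t, y s := by
      have hmono : (∫ s in (t-1)..t, (ε * Real.exp (-C))) ≤ ∫ s in (t-1)..t, y s := by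
        apply intervalIntegral.integral_mono_on (by linarith) intervalIntegrable_const hii1
        intro s hs
        calc ε * Real.exp (-C) ≤ y t * Real.exp (-C) :=
              mul_le_mul_of_nonneg_right hyt' (Real.exp_pos _).le
          _ ≤ y s := key t ht1 s hs
      rw [intervalIntegral.integral_const] at hmono
      have : (t - (t-1)) = (1:ℝ) := by ring
      rw [this] at hmono
      simpa using hmono
    have hsplit : (∫ s in (0:ℝ)..(t-1), y s) + (∫ s in (t-1)..t, y s)
        = ∫ s in (0:ℝ)..t, y s :=
      intervalIntegral.integral_add_adjacent_intervals hii2 hii1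
    have := hN t htN
    linarith
  -- conclude for x
  have hxy : x =ᶠ[atTop] fun t => y t / (1 - y t) := by
    filter_upwards [eventually_ge_atTop (0:ℝ)] with t ht
    have h1 := h1x t ht
    have e1 : 1 - y t = 1 / (1 + x t) := by
      simp only [hy_def]; field_simp; ring
    rw [e1, div_div_eq_mul_div, div_one]
    simp only [hy_def]
    field_simp
  have hf : ContinuousAt (fun u : ℝ => u / (1 - u)) 0 :=
    ContinuousAt.div continuousAt_id (continuousAt_const.sub continuousAt_id) (by norm_num)
  refine Tendsto.congr' hxy.symm ?_
  have := hf.tendsto.comp hy0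
  simpa [Function.comp_def] using this
end

section
/- Let H be a real Hilbert space and let P : H → H be a continuous linear operator that is self-adjoint and nonnegative (⟨P w, w⟩ ≥ 0 for all w ∈ H). Let v : ℝ → H be continuously differentiable with v(0) = 0, and let f : ℝ → H be continuous, and suppose v'(t) = −P(v(t)) + f(t) for all t ∈ [0, 1]. Then ∫₀¹ ‖v'(t)‖² dt + ∫₀¹ ‖P(v(t))‖² dt ≤ ∫₀¹ ‖f(t)‖² dt. -/
open MeasureTheory

/-- Abstract parabolic energy estimate: if `P` is a nonnegative self-adjoint bounded
operator on a real Hilbert space, `v` is `C¹` with `v(0) = 0` and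
`v' = −P v + f` on `[0, 1]`, then
`∫₀¹ ‖v'‖² + ∫₀¹ ‖P v‖² ≤ ∫₀¹ ‖f‖²`. -/
theorem stmt_7 {H : Type*} [NormedAddCommGroup H] [InnerProductSpace ℝ H]
    [CompleteSpace H] (P : H →L[ℝ] H)
    (hself : ∀ w w' : H, (inner ℝ (P w) w' : ℝ) = (inner ℝ w (P w') : ℝ))
    (hnonneg : ∀ w : H, 0 ≤ (inner ℝ (P w) w : ℝ))
    (v v' f : ℝ → H)
    (hv : ∀ t : ℝ, HasDerivAt v (v' t) t)
    (hv' : Continuous v')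
    (hf : Continuous f)
    (hv0 : v 0 = 0)
    (heq : ∀ t ∈ Set.Icc (0 : ℝ) 1, v' t = -P (v t) + f t) :
    (∫ t in (0 : ℝ)..1, ‖v' t‖ ^ 2) + ∫ t in (0 : ℝ)..1, ‖P (v t)‖ ^ 2
      ≤ ∫ t in (0 : ℝ)..1, ‖f t‖ ^ 2 := by
  have hvc : Continuous v := by
    rw [continuous_iff_continuousAt]; exact fun t => (hv t).continuousAt
  have hPvc : Continuous fun t => P (v t) := P.continuous.comp hvc
  set g : ℝ → ℝ := fun t => (inner ℝ (P (v t)) (v t) : ℝ) with hg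
  have hgderiv : ∀ t : ℝ, HasDerivAt g (2 * (inner ℝ (P (v t)) (v' t) : ℝ)) t := by
    intro t
    have hPv : HasDerivAt (fun t => P (v t)) (P (v' t)) t := by
      simpa [Function.comp_def] using (P.hasFDerivAt.comp t (hv t).hasFDerivAt).hasDerivAt
    have := hPv.inner ℝ (hv t)
    refine this.congr_deriv ?_
    have : (inner ℝ (P (v' t)) (v t) : ℝ) = (inner ℝ (P (v t)) (v' t) : ℝ) := by
      rw [hself, real_inner_comm]
    rw [this]; ring
  have hcross_cont : Continuous fun t => (inner ℝ (P (v t)) (v' t) : ℝ) :=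
    hPvc.inner hv'
  have hint : ∫ t in (0:ℝ)..1, 2 * (inner ℝ (P (v t)) (v' t) : ℝ) = g 1 - g 0 := by
    exact intervalIntegral.integral_eq_sub_of_hasDerivAt
      (fun t _ => hgderiv t)
      ((continuous_const.mul hcross_cont).intervalIntegrable 0 1)
  have hg0 : g 0 = 0 := by simp [hg, hv0]
  have hg1 : 0 ≤ g 1 := hnonneg _
  -- pointwise identity on [0,1]
  have hpt : ∀ t ∈ Set.uIcc (0:ℝ) 1,
      ‖f t‖ ^ 2 = ‖v' t‖ ^ 2 + ‖P (v t)‖ ^ 2 + 2 * (inner ℝ (P (v t)) (v' t) : ℝ) := by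
    intro t ht
    rw [Set.uIcc_of_le (by norm_num)] at ht
    have hft : f t = v' t + P (v t) := by
      have := heq t ht; rw [this]; abel
    rw [hft, @norm_add_sq_real]
    have : (inner ℝ (v' t) (P (v t)) : ℝ) = (inner ℝ (P (v t)) (v' t) : ℝ) :=
      real_inner_comm _ _
    rw [this]; ring
  have hI : ∫ t in (0:ℝ)..1, ‖f t‖ ^ 2
      = ∫ t in (0:ℝ)..1, (‖v' t‖ ^ 2 + ‖P (v t)‖ ^ 2 + 2 * (inner ℝ (P (v t)) (v' t) : ℝ)) :=
    intervalIntegral.integral_congr hpt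
  have i1 : IntervalIntegrable (fun t => ‖v' t‖ ^ 2) volume 0 1 :=
    ((hv'.norm.pow 2)).intervalIntegrable 0 1
  have i2 : IntervalIntegrable (fun t => ‖P (v t)‖ ^ 2) volume 0 1 :=
    ((hPvc.norm.pow 2)).intervalIntegrable 0 1
  have i3 : IntervalIntegrable (fun t => 2 * (inner ℝ (P (v t)) (v' t) : ℝ)) volume 0 1 :=
    (continuous_const.mul hcross_cont).intervalIntegrable 0 1
  rw [show (∫ t in (0:ℝ)..1, ‖f t‖ ^ 2)
      = (∫ t in (0:ℝ)..1, ‖v' t‖ ^ 2) + (∫ t in (0:ℝ)..1, ‖P (v t)‖ ^ 2)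
        + (g 1 - g 0) by
    rw [hI, intervalIntegral.integral_add (i1.add i2) i3,
      intervalIntegral.integral_add i1 i2, hint]]
  rw [hg0]
  linarith
end
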